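/- For every k ≥ 0 there is a scalar c ∈ ℝ (depending only on k) such that S₁^k(0) = c·p₁ and S₂^k(0) = c·p₂; moreover the midpoint of S₁(S₂^k(0)) and S₂(S₁^k(0)) equals (p₁ + p₂)/(N+2), and in particular S₁(p₂) = S₂(p₁) = (p₁ + p₂)/(N+2). (Computations from the proof of Theorem 2.5.) -/

import Mathlib

open Set Filter

noncomputable section

abbrev E (N : ℕ) := EuclideanSpace ℝ (Fin N)

/-- Vertex `p_j` of the regular simplex. -/
def gPt (N : ℕ) (j : Fin N) : E N :=
  (Real.sqrt 2)⁻¹ • (EuclideanSpace.single j (1 : ℝ) -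
    (N : ℝ)⁻¹ • ∑ i : Fin N, EuclideanSpace.single i (1 : ℝ))

/-- The affine map `S_j`. -/
def gS (N : ℕ) (j : Fin N) (x : E N) : E N :=
  ((N : ℝ) + 2)⁻¹ • x +
    (((N : ℝ) + 2)⁻¹ * (2 + ((N : ℝ) - 1) * (inner ℝ x (gPt N j) : ℝ) / ‖gPt N j‖ ^ 2)) • gPt N j

lemma inner_gPt (N : ℕ) (hN : 1 ≤ N) (i j : Fin N) :
    (inner ℝ (gPt N i) (gPt N j) : ℝ)
      = (2:ℝ)⁻¹ * ((if i = j then (1:ℝ) else 0) - (N : ℝ)⁻¹) := by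
  have hN0 : (N : ℝ) ≠ 0 := by positivity
  have h2 : (Real.sqrt 2)⁻¹ * (Real.sqrt 2)⁻¹ = (2:ℝ)⁻¹ := by
    rw [← mul_inv, Real.mul_self_sqrt (by norm_num)]
  have hs : ∀ a : Fin N,
      (∑ x : Fin N, (Real.sqrt 2)⁻¹ * ((if a = x then (1:ℝ) else 0) - (N:ℝ)⁻¹)) = 0 := by
    intro a
    simp [← Finset.mul_sum, Finset.sum_sub_distrib, Finset.sum_ite_eq,
      Finset.card_univ, mul_inv_cancel₀ hN0]
  unfold gPt
  simp only [inner_smul_left, inner_smul_right, inner_sub_left, inner_sub_right,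
    inner_sum, sum_inner, EuclideanSpace.inner_single_left, EuclideanSpace.inner_single_right,
    EuclideanSpace.single_apply, RCLike.star_def, conj_trivial, one_mul, mul_one,
    Finset.sum_sub_distrib, Finset.sum_ite_eq, Finset.sum_ite_eq', Finset.mem_univ, if_true,
    Finset.sum_const, Finset.card_univ, Fintype.card_fin, nsmul_eq_mul]
  by_cases h : i = j <;> simp [h, eq_comm, hs, ← mul_assoc, h2]

lemma norm_sq_gPt (N : ℕ) (hN : 2 ≤ N) (j : Fin N) :
    ‖gPt N j‖ ^ 2 = ((N : ℝ) - 1) / (2 * N) := by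
  rw [← real_inner_self_eq_norm_sq, inner_gPt N (by omega), if_pos rfl]
  have hN0 : (N : ℝ) ≠ 0 := by positivity
  field_simp

lemma gS_self (N : ℕ) (hN : 2 ≤ N) (j : Fin N) (c : ℝ) :
    gS N j (c • gPt N j) = (((N : ℝ) * c + 2) / ((N : ℝ) + 2)) • gPt N j := by
  have hN0 : (N : ℝ) ≠ 0 := by positivity
  have hN1 : (N : ℝ) - 1 ≠ 0 := by
    have : (2:ℝ) ≤ N := by exact_mod_cast hN
    linarith
  have hN2 : (N : ℝ) + 2 ≠ 0 := by positivity
  rw [gS, norm_sq_gPt N hN, inner_smul_left, inner_gPt N (by omega)]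
  simp only [RCLike.star_def, conj_trivial, if_pos rfl, eq_self_iff_true, if_true]
  match_scalars
  field_simp
  ring

lemma gS_other (N : ℕ) (hN : 2 ≤ N) (i j : Fin N) (hij : i ≠ j) (c : ℝ) :
    gS N i (c • gPt N j)
      = (c / ((N : ℝ) + 2)) • gPt N j + ((2 - c) / ((N : ℝ) + 2)) • gPt N i := by
  have hN0 : (N : ℝ) ≠ 0 := by positivity
  have hN1 : (N : ℝ) - 1 ≠ 0 := by
    have : (2:ℝ) ≤ N := by exact_mod_cast hN
    linarith
  have hN2 : (N : ℝ) + 2 ≠ 0 := by positivity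
  rw [gS, norm_sq_gPt N hN, inner_smul_left, inner_gPt N (by omega)]
  simp only [RCLike.star_def, conj_trivial, if_neg hij.symm]
  match_scalars <;> field_simp <;> ring

/-- iterates of `0` under `S₁`, `S₂` and the midpoint computation
from the proof of Theorem 2.5. -/
theorem iterates_and_midpoint (N : ℕ) (hN : 2 ≤ N) :
    (∀ k : ℕ, ∃ c : ℝ,
      (gS N ⟨0, by omega⟩)^[k] 0 = c • gPt N ⟨0, by omega⟩ ∧
      (gS N ⟨1, by omega⟩)^[k] 0 = c • gPt N ⟨1, by omega⟩ ∧
      midpoint ℝ (gS N ⟨0, by omega⟩ ((gS N ⟨1, by omega⟩)^[k] 0))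
          (gS N ⟨1, by omega⟩ ((gS N ⟨0, by omega⟩)^[k] 0)) =
        ((N : ℝ) + 2)⁻¹ • (gPt N ⟨0, by omega⟩ + gPt N ⟨1, by omega⟩)) ∧
    gS N ⟨0, by omega⟩ (gPt N ⟨1, by omega⟩) =
      ((N : ℝ) + 2)⁻¹ • (gPt N ⟨0, by omega⟩ + gPt N ⟨1, by omega⟩) ∧
    gS N ⟨1, by omega⟩ (gPt N ⟨0, by omega⟩) =
      ((N : ℝ) + 2)⁻¹ • (gPt N ⟨0, by omega⟩ + gPt N ⟨1, by omega⟩) := by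
  have hN2 : (N : ℝ) + 2 ≠ 0 := by positivity
  set i0 : Fin N := ⟨0, by omega⟩
  set i1 : Fin N := ⟨1, by omega⟩
  have h01 : i0 ≠ i1 := by simp [i0, i1, Fin.ext_iff]
  have hiter : ∀ k : ℕ, ∃ c : ℝ,
      (gS N i0)^[k] 0 = c • gPt N i0 ∧ (gS N i1)^[k] 0 = c • gPt N i1 := by
    intro k
    induction k with
    | zero => exact ⟨0, by simp, by simp⟩
    | succ k ih =>
      obtain ⟨c, h0, h1⟩ := ih
      refine ⟨((N : ℝ) * c + 2) / ((N : ℝ) + 2), ?_, ?_⟩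
      · rw [Function.iterate_succ_apply', h0, gS_self N hN]
      · rw [Function.iterate_succ_apply', h1, gS_self N hN]
  have hmid : ∀ c : ℝ,
      midpoint ℝ (gS N i0 (c • gPt N i1)) (gS N i1 (c • gPt N i0)) =
        ((N : ℝ) + 2)⁻¹ • (gPt N i0 + gPt N i1) := by
    intro c
    rw [gS_other N hN i0 i1 h01, gS_other N hN i1 i0 h01.symm, midpoint_eq_smul_add, invOf_eq_inv]
    match_scalars <;> field_simp <;> ring
  have hP1 : gS N i0 (gPt N i1) = ((N : ℝ) + 2)⁻¹ • (gPt N i0 + gPt N i1) := by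
    have h := gS_other N hN i0 i1 h01 1
    rw [one_smul] at h
    rw [h]
    match_scalars <;> (field_simp; try norm_num)
  have hP2 : gS N i1 (gPt N i0) = ((N : ℝ) + 2)⁻¹ • (gPt N i0 + gPt N i1) := by
    have h := gS_other N hN i1 i0 h01.symm 1
    rw [one_smul] at h
    rw [h]
    match_scalars <;> (field_simp; try norm_num)
  refine ⟨?_, hP1, hP2⟩
  intro k
  obtain ⟨c, h0, h1⟩ := hiter k
  exact ⟨c, h0, h1, by rw [h0, h1]; exact hmid c⟩
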